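/- Let G be a finite simple (C4, diamond)-free graph with no clique cutset, and let w be a weight function on G. Let U be the set of unbalanced vertices of G, and for each v ∈ U let (A_v, C_v, B_v) be the canonical star separation for v. Then the relation ≤_A on U defined by x ≤_A y if and only if x = y or y ∈ A_x is a partial order (reflexive, antisymmetric and transitive). -/
import Mathlib


open SimpleGraph

namespace Paper

variable {V : Type*}

/-- `G` contains an induced subgraph isomorphic to `H`. -/
def ContainsInduced {W : Type*} (G : SimpleGraph V) (H : SimpleGraph W) : Prop :=
  ∃ S : Set V, Nonempty (G.induce S ≃g H)

/-- `G` is `H`-free: no induced subgraph of `G` is isomorphic to `H`. -/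
def Free {W : Type*} (G : SimpleGraph V) (H : SimpleGraph W) : Prop :=
  ¬ ContainsInduced G H

/-- The diamond: `K₄` minus an edge. -/
def diamond : SimpleGraph (Fin 4) :=
  (⊤ : SimpleGraph (Fin 4)).deleteEdges {s(0, 1)}

/-- `S` induces a hole (an induced cycle of length at least 4) in `G`. -/
def IsHoleSet (G : SimpleGraph V) (S : Set V) : Prop :=
  ∃ n : ℕ, 4 ≤ n ∧ Nonempty (G.induce S ≃g cycleGraph n)

/-- `G` contains an even hole. -/
def HasEvenHole (G : SimpleGraph V) : Prop :=
  ∃ S : Set V, ∃ n : ℕ, 4 ≤ n ∧ Even n ∧ Nonempty (G.induce S ≃g cycleGraph n)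

/-- The union of the vertex sets of two walks induces a hole in `G`. -/
def PairHole (G : SimpleGraph V) {a b c d : V} (P : G.Walk a b) (Q : G.Walk c d) : Prop :=
  IsHoleSet G {v | v ∈ P.support ∨ v ∈ Q.support}

/-- `G` contains a theta. -/
def HasTheta (G : SimpleGraph V) : Prop :=
  ∃ (a b : V) (P₁ P₂ P₃ : G.Walk a b),
    a ≠ b ∧ ¬ G.Adj a b ∧
    P₁.IsPath ∧ P₂.IsPath ∧ P₃.IsPath ∧
    PairHole G P₁ P₂ ∧ PairHole G P₁ P₃ ∧ PairHole G P₂ P₃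

/-- `G` contains a pyramid. -/
def HasPyramid (G : SimpleGraph V) : Prop :=
  ∃ (a b₁ b₂ b₃ : V) (P₁ : G.Walk a b₁) (P₂ : G.Walk a b₂) (P₃ : G.Walk a b₃),
    G.Adj b₁ b₂ ∧ G.Adj b₁ b₃ ∧ G.Adj b₂ b₃ ∧
    a ≠ b₁ ∧ a ≠ b₂ ∧ a ≠ b₃ ∧
    P₁.IsPath ∧ P₂.IsPath ∧ P₃.IsPath ∧
    PairHole G P₁ P₂ ∧ PairHole G P₁ P₃ ∧ PairHole G P₂ P₃

/-- `G` contains a prism. -/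
def HasPrism (G : SimpleGraph V) : Prop :=
  ∃ (a₁ a₂ a₃ b₁ b₂ b₃ : V) (P₁ : G.Walk a₁ b₁) (P₂ : G.Walk a₂ b₂) (P₃ : G.Walk a₃ b₃),
    G.Adj a₁ a₂ ∧ G.Adj a₁ a₃ ∧ G.Adj a₂ a₃ ∧
    G.Adj b₁ b₂ ∧ G.Adj b₁ b₃ ∧ G.Adj b₂ b₃ ∧
    ({a₁, a₂, a₃} : Set V) ∩ {b₁, b₂, b₃} = ∅ ∧
    P₁.IsPath ∧ P₂.IsPath ∧ P₃.IsPath ∧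
    PairHole G P₁ P₂ ∧ PairHole G P₁ P₃ ∧ PairHole G P₂ P₃

/-- The neighbors of `v` inside the set `S`. -/
def nbrsIn (G : SimpleGraph V) (S : Set V) (v : V) : Set V :=
  {u | u ∈ S ∧ G.Adj v u}

/-- `(S, v)` is a wheel of `G`: `S` is a hole and `v ∉ S` has at least 3 neighbors in `S`. -/
def IsWheel (G : SimpleGraph V) (S : Set V) (v : V) : Prop :=
  IsHoleSet G S ∧ v ∉ S ∧ 3 ≤ (nbrsIn G S v).ncard

/-- `(S, v)` is an even wheel of `G`. -/
def IsEvenWheel (G : SimpleGraph V) (S : Set V) (v : V) : Prop :=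
  IsWheel G S v ∧ Even (nbrsIn G S v).ncard

def HasWheel (G : SimpleGraph V) : Prop := ∃ (S : Set V) (v : V), IsWheel G S v

def HasEvenWheel (G : SimpleGraph V) : Prop := ∃ (S : Set V) (v : V), IsEvenWheel G S v

/-- A bug: a wheel whose hub has exactly three neighbors in the hole,
exactly two of which are adjacent. -/
def IsBug (G : SimpleGraph V) (S : Set V) (v : V) : Prop :=
  IsWheel G S v ∧ ∃ x y z : V, x ≠ y ∧ x ≠ z ∧ y ≠ z ∧
    nbrsIn G S v = {x, y, z} ∧ G.Adj x y ∧ ¬ G.Adj x z ∧ ¬ G.Adj y z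

/-- A twin wheel: the neighbors of the hub in the hole induce a path of length two. -/
def IsTwinWheel (G : SimpleGraph V) (S : Set V) (v : V) : Prop :=
  IsWheel G S v ∧ ∃ x y z : V, x ≠ y ∧ x ≠ z ∧ y ≠ z ∧
    nbrsIn G S v = {x, y, z} ∧ G.Adj x y ∧ G.Adj y z ∧ ¬ G.Adj x z

/-- A universal wheel: the hub is adjacent to every vertex of the hole. -/
def IsUniversalWheel (G : SimpleGraph V) (S : Set V) (v : V) : Prop :=
  IsWheel G S v ∧ ∀ u ∈ S, G.Adj v u

/-- `G` is a member of the class 𝒞 of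
(C4, diamond, theta, pyramid, prism, even wheel)-free graphs. -/
def InC (G : SimpleGraph V) : Prop :=
  Free G (cycleGraph 4) ∧ Free G diamond ∧ ¬ HasTheta G ∧ ¬ HasPyramid G ∧
    ¬ HasPrism G ∧ ¬ HasEvenWheel G

/-- The independence number of `G`. -/
noncomputable def indepNum (G : SimpleGraph V) : ℕ :=
  sSup {n | ∃ S : Set V, (S.Pairwise fun u v => ¬ G.Adj u v) ∧ S.ncard = n}

/-- The clique number of `G`. -/
noncomputable def cliqueNum (G : SimpleGraph V) : ℕ :=
  sSup {n | ∃ S : Set V, G.IsClique S ∧ S.ncard = n}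

/-- The (vertex) clique cover number of `G`: the minimum number of parts in a
partition of the vertex set of `G` into cliques. -/
noncomputable def cliqueCoverNum (G : SimpleGraph V) : ℕ :=
  sInf {n | ∃ F : Finset (Set V), F.card = n ∧ (∀ C ∈ F, G.IsClique C) ∧
    ∀ v : V, ∃! C : Set V, C ∈ F ∧ v ∈ C}

/-- A tree decomposition of `G`. -/
structure TreeDecomp (G : SimpleGraph V) where
  ι : Type
  tree : SimpleGraph ι
  tree_acyclic : tree.IsAcyclic
  tree_connected : tree.Connected
  bag : ι → Set V
  bag_cover : ∀ v : V, ∃ t, v ∈ bag t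
  bag_edge : ∀ ⦃u v : V⦄, G.Adj u v → ∃ t, u ∈ bag t ∧ v ∈ bag t
  bag_subtree : ∀ v : V, (tree.induce {t | v ∈ bag t}).Connected

/-- The treewidth of `G`: the minimum over tree decompositions of (max bag size − 1). -/
noncomputable def treewidth (G : SimpleGraph V) : ℕ :=
  sInf {k | ∃ D : TreeDecomp G, ∀ t, (D.bag t).ncard ≤ k + 1}

/-- The tree independence number of `G`. -/
noncomputable def treeIndepNum (G : SimpleGraph V) : ℕ :=
  sInf {k | ∃ D : TreeDecomp G, ∀ t, indepNum (G.induce (D.bag t)) ≤ k}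

/-- The tree clique cover number of `G`. -/
noncomputable def treeCliqueCoverNum (G : SimpleGraph V) : ℕ :=
  sInf {k | ∃ D : TreeDecomp G, ∀ t, cliqueCoverNum (G.induce (D.bag t)) ≤ k}

/-- A weight function on a finite graph: values in `[0,1]` summing to `1`. -/
def IsWeightFn [Fintype V] (w : V → ℝ) : Prop :=
  (∀ v, 0 ≤ w v ∧ w v ≤ 1) ∧ ∑ v, w v = 1

/-- The weight of a set of vertices. -/
noncomputable def wSet (w : V → ℝ) (S : Set V) : ℝ := ∑ᶠ x ∈ S, w x

/-- `X` is a `(w, c)`-balanced separator of `G`: every connected component of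
`G − X` has weight at most `c`. -/
def IsBalancedSep (G : SimpleGraph V) (w : V → ℝ) (c : ℝ) (X : Set V) : Prop :=
  ∀ D : (G.induce Xᶜ).ConnectedComponent, wSet w (Subtype.val '' D.supp) ≤ c

/-- `G` has a clique cutset: a clique `C` such that `G − C` is disconnected. -/
def HasCliqueCutset (G : SimpleGraph V) : Prop :=
  ∃ C : Set V, G.IsClique C ∧ ¬ (G.induce Cᶜ).Preconnected

/-- The closed neighborhood of `v`. -/
def closedNbhd (G : SimpleGraph V) (v : V) : Set V := insert v (G.neighborSet v)

/-- The (open) neighborhood of a set `S`: vertices outside `S` with a neighbor in `S`. -/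
def setNbhd (G : SimpleGraph V) (S : Set V) : Set V :=
  {v | v ∉ S ∧ ∃ u ∈ S, G.Adj v u}

/-- `(A, C, B)` is a separation of `G`. -/
def IsSeparation (G : SimpleGraph V) (A C B : Set V) : Prop :=
  A ∪ C ∪ B = Set.univ ∧ Disjoint A C ∧ Disjoint A B ∧ Disjoint C B ∧
    ∀ a ∈ A, ∀ b ∈ B, ¬ G.Adj a b

/-- `v` is a balanced vertex with respect to `w`: every connected component of
`G − N[v]` has weight at most `1/2`. -/
def IsBalancedVtx (G : SimpleGraph V) (w : V → ℝ) (v : V) : Prop :=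
  ∀ D : (G.induce (closedNbhd G v)ᶜ).ConnectedComponent,
    wSet w (Subtype.val '' D.supp) ≤ 1 / 2


section Aux13

variable {V : Type} [Fintype V]

lemma wSet_toFinset' (w : V → ℝ) (S : Set V) :
    wSet w S = ∑ x ∈ (Set.toFinite S).toFinset, w x := by
  rw [wSet, ← finsum_mem_coe_finset]
  congr 1
  simp

lemma inter_nonempty_of_halves {w : V → ℝ} (hw : IsWeightFn w) {S T : Set V}
    (hS : 1 / 2 < wSet w S) (hT : 1 / 2 < wSet w T) : (S ∩ T).Nonempty := by
  classical
  by_contra h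
  rw [Set.not_nonempty_iff_eq_empty] at h
  have hdisj : Disjoint (Set.toFinite S).toFinset (Set.toFinite T).toFinset := by
    rw [Finset.disjoint_left]
    intro a ha hb
    rw [Set.Finite.mem_toFinset] at ha hb
    have : a ∈ S ∩ T := ⟨ha, hb⟩
    rw [h] at this
    exact this
  have h1 : ∑ x ∈ (Set.toFinite S).toFinset ∪ (Set.toFinite T).toFinset, w x
      = wSet w S + wSet w T := by
    rw [Finset.sum_union hdisj, wSet_toFinset', wSet_toFinset']
  have h2 : ∑ x ∈ (Set.toFinite S).toFinset ∪ (Set.toFinite T).toFinset, w x ≤ ∑ x, w x :=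
    Finset.sum_le_sum_of_subset_of_nonneg (Finset.subset_univ _)
      (fun i _ _ => (hw.1 i).1)
  rw [hw.2, h1] at h2
  rw [wSet_toFinset'] at hS hT
  rw [wSet_toFinset', wSet_toFinset'] at h2
  linarith

lemma reachable_transport {G : SimpleGraph V} {S T : Set V} {a b : ↥S}
    (p : (G.induce S).Walk a b) (hT : ∀ c ∈ p.support, (c : V) ∈ T) :
    (G.induce T).Reachable ⟨a, hT a p.start_mem_support⟩ ⟨b, hT b p.end_mem_support⟩ := by
  induction p with
  | nil => exact SimpleGraph.Reachable.refl _
  | @cons u v x h p ih =>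
    have hv : (v : V) ∈ T := hT v (by simp)
    have hu : (u : V) ∈ T := hT u (by simp)
    have step : (G.induce T).Adj ⟨u, hu⟩ ⟨v, hv⟩ := by
      simp only [SimpleGraph.comap_adj] at h ⊢
      exact h
    exact step.reachable.trans (ih (fun c hc => hT c (by simp [hc])))

lemma reachable_of_mem_support {W : Type*} {G : SimpleGraph W} {a b c : W}
    (p : G.Walk a b) (hc : c ∈ p.support) : G.Reachable a c := by
  classical
  exact ⟨p.takeUntil c hc⟩

lemma containsInduced_four {V : Type} (G : SimpleGraph V) (H : SimpleGraph (Fin 4))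
    (a b c d : V)
    (hinj : Function.Injective ![a, b, c, d])
    (hiff : ∀ i j : Fin 4, G.Adj (![a, b, c, d] i) (![a, b, c, d] j) ↔ H.Adj i j) :
    ContainsInduced G H := by
  classical
  set f : Fin 4 → V := ![a, b, c, d] with hf
  refine ⟨Set.range f, ⟨?_⟩⟩
  let e : Fin 4 ≃ ↥(Set.range f) := Equiv.ofInjective f hinj
  refine ⟨e.symm, ?_⟩
  intro u v
  have hu : f (e.symm u) = (u : V) := congrArg Subtype.val (e.apply_symm_apply u)
  have hv : f (e.symm v) = (v : V) := congrArg Subtype.val (e.apply_symm_apply v)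
  show H.Adj (e.symm u) (e.symm v) ↔ (G.induce (Set.range f)).Adj u v
  rw [← hiff]
  simp only [SimpleGraph.comap_adj]
  rw [hu, hv]
  rfl

end Aux13
instance : DecidableRel diamond.Adj := fun i j =>
  decidable_of_iff (i ≠ j ∧ ¬ s(i, j) = s(0, 1)) (by
    simp [diamond, SimpleGraph.deleteEdges_adj, Set.mem_singleton_iff])
theorem statement13 {V : Type} [Fintype V] (G : SimpleGraph V)
    (hc4 : Free G (cycleGraph 4)) (hd : Free G diamond) (hnc : ¬ HasCliqueCutset G)
    (w : V → ℝ) (hw : IsWeightFn w)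
    (U : Set V) (hU : U = {v | ¬ IsBalancedVtx G w v})
    (B A : V → Set V)
    (hB : ∀ v ∈ U, (∃ D : (G.induce (closedNbhd G v)ᶜ).ConnectedComponent,
      B v = Subtype.val '' D.supp) ∧ 1 / 2 < wSet w (B v))
    (hA : ∀ v ∈ U, A v = (B v ∪ ({v} ∪ (G.neighborSet v ∩ setNbhd G (B v))))ᶜ) :
    (∀ x ∈ U, x = x ∨ x ∈ A x) ∧
    (∀ x ∈ U, ∀ y ∈ U, (x = y ∨ y ∈ A x) → (y = x ∨ x ∈ A y) → x = y) ∧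
    (∀ x ∈ U, ∀ y ∈ U, ∀ z ∈ U,
      (x = y ∨ y ∈ A x) → (y = z ∨ z ∈ A y) → (x = z ∨ z ∈ A x)) := by
  -- membership characterization of A
  have hAmem : ∀ x ∈ U, ∀ z : V, z ∈ A x ↔
      z ∉ B x ∧ z ≠ x ∧ ¬(G.Adj x z ∧ z ∈ setNbhd G (B x)) := by
    intro x hx z
    rw [hA x hx]
    simp only [Set.mem_compl_iff, Set.mem_union, Set.mem_singleton_iff, Set.mem_inter_iff,
      SimpleGraph.mem_neighborSet]
    tauto
  have hBcompl : ∀ v ∈ U, B v ⊆ (closedNbhd G v)ᶜ := by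
    intro v hv
    obtain ⟨⟨D, hD⟩, -⟩ := hB v hv
    rw [hD]
    rintro _ ⟨u, -, rfl⟩
    exact u.2
  have hvnotB : ∀ v ∈ U, v ∉ B v := by
    intro v hv hmem
    exact (hBcompl v hv hmem) (Set.mem_insert v _)
  -- neighbors of B v are neighbors of v
  have hnbhd : ∀ v ∈ U, setNbhd G (B v) ⊆ G.neighborSet v := by
    intro v hv u hu
    obtain ⟨⟨D, hD⟩, -⟩ := hB v hv
    obtain ⟨hunB, b, hbB, hadj⟩ := hu
    by_contra hun
    have hb' : b ∈ (closedNbhd G v)ᶜ := hBcompl v hv hbB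
    have huv : u ≠ v := by
      rintro rfl
      exact hb' (Set.mem_insert_iff.mpr (Or.inr hadj))
    have hu' : u ∈ (closedNbhd G v)ᶜ := by
      intro hmem
      rcases Set.mem_insert_iff.mp hmem with h | h
      · exact huv h
      · exact hun h
    rw [hD] at hbB
    obtain ⟨b0, hb0, hval⟩ := hbB
    have hedge : (G.induce (closedNbhd G v)ᶜ).Adj ⟨u, hu'⟩ b0 := by
      simp only [SimpleGraph.comap_adj]
      show G.Adj u (b0 : V)
      rw [hval]; exact hadj
    apply hunB
    rw [hD]
    refine ⟨⟨u, hu'⟩, ?_, rfl⟩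
    rw [SimpleGraph.ConnectedComponent.mem_supp_iff]
    rw [SimpleGraph.ConnectedComponent.mem_supp_iff] at hb0
    rw [← hb0]
    exact SimpleGraph.ConnectedComponent.sound hedge.reachable
  -- key lemma: y ∈ A x implies B x ⊆ B y
  have hBsub : ∀ x ∈ U, ∀ y ∈ U, y ∈ A x → B x ⊆ B y := by
    intro x hx y hy hyA
    obtain ⟨⟨Dx, hDx⟩, hwx⟩ := hB x hx
    obtain ⟨⟨Dy, hDy⟩, hwy⟩ := hB y hy
    obtain ⟨p, hpx, hpy⟩ := inter_nonempty_of_halves hw hwx hwy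
    rw [hAmem x hx] at hyA
    obtain ⟨hyB, hyx, hyN⟩ := hyA
    have hsub : B x ⊆ (closedNbhd G y)ᶜ := by
      intro b hbB hmem
      rcases Set.mem_insert_iff.mp hmem with h | h
      · exact hyB (h ▸ hbB)
      · -- h : b ∈ neighborSet y, i.e. G.Adj y b
        have hyS : y ∈ setNbhd G (B x) := ⟨hyB, b, hbB, h⟩
        exact hyN ⟨hnbhd x hx hyS, hyS⟩
    intro b hbB
    have hbB' := hbB
    rw [hDx] at hbB' hpx
    obtain ⟨b0, hb0, hbval⟩ := hbB'
    obtain ⟨p0, hp0, hpval⟩ := hpx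
    rw [SimpleGraph.ConnectedComponent.mem_supp_iff] at hb0 hp0
    obtain ⟨q⟩ := SimpleGraph.ConnectedComponent.exact (hb0.trans hp0.symm)
    have hsupp : ∀ c ∈ q.support, (c : V) ∈ (closedNbhd G y)ᶜ := by
      intro c hc
      apply hsub
      rw [hDx]
      refine ⟨c, ?_, rfl⟩
      rw [SimpleGraph.ConnectedComponent.mem_supp_iff]
      rw [← hb0]
      exact (SimpleGraph.ConnectedComponent.sound (reachable_of_mem_support q hc)).symm
    have hreach := reachable_transport q hsupp
    rw [hDy] at hpy ⊢
    obtain ⟨p1, hp1, hp1val⟩ := hpy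
    refine ⟨⟨(b0 : V), hsupp b0 q.start_mem_support⟩, ?_, hbval⟩
    rw [SimpleGraph.ConnectedComponent.mem_supp_iff]
    rw [SimpleGraph.ConnectedComponent.mem_supp_iff] at hp1
    have heq : (⟨(p0 : V), hsupp p0 q.end_mem_support⟩ : ↥(closedNbhd G y)ᶜ) = p1 :=
      Subtype.ext (by rw [hpval, ← hp1val])
    calc (G.induce (closedNbhd G y)ᶜ).connectedComponentMk ⟨(b0 : V), _⟩
        = (G.induce (closedNbhd G y)ᶜ).connectedComponentMk ⟨(p0 : V), _⟩ :=
          SimpleGraph.ConnectedComponent.sound hreach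
      _ = Dy := heq ▸ hp1
  -- B v is nonempty
  have hBne : ∀ v ∈ U, (B v).Nonempty := by
    intro v hv
    obtain ⟨-, hwv⟩ := hB v hv
    obtain ⟨p, hp, -⟩ := inter_nonempty_of_halves hw hwv hwv
    exact ⟨p, hp⟩
  -- setNbhd G (B v) is not a clique
  have hpair : ∀ v ∈ U, ∃ u1 u2 : V, u1 ∈ setNbhd G (B v) ∧ u2 ∈ setNbhd G (B v) ∧
      u1 ≠ u2 ∧ ¬ G.Adj u1 u2 := by
    intro v hv
    have hnclq : ¬ G.IsClique (setNbhd G (B v)) := by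
      intro hclq
      have hpre : (G.induce (setNbhd G (B v))ᶜ).Preconnected := by
        by_contra hpre
        exact hnc ⟨setNbhd G (B v), hclq, hpre⟩
      obtain ⟨b, hbB⟩ := hBne v hv
      have hbC : b ∈ (setNbhd G (B v))ᶜ := fun h => h.1 hbB
      have hvC : v ∈ (setNbhd G (B v))ᶜ := fun h => G.irrefl (hnbhd v hv h)
      obtain ⟨q⟩ := hpre ⟨b, hbC⟩ ⟨v, hvC⟩
      have hstay : ∀ {a c : ↥(setNbhd G (B v))ᶜ} (q : (G.induce (setNbhd G (B v))ᶜ).Walk a c),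
          (a : V) ∈ B v → (c : V) ∈ B v := by
        intro a c q
        induction q with
        | nil => exact id
        | @cons a' u c' h p ih =>
          intro ha
          apply ih
          by_contra hu
          have hadj : G.Adj (a' : V) (u : V) := h
          exact u.2 ⟨hu, (a' : V), ha, hadj.symm⟩
      exact hvnotB v hv (hstay q hbB)
    rw [SimpleGraph.isClique_iff, Set.Pairwise] at hnclq
    push_neg at hnclq
    obtain ⟨u1, h1, u2, h2, hne, hna⟩ := hnclq
    exact ⟨u1, u2, h1, h2, hne, hna⟩
  refine ⟨fun x _ => Or.inl rfl, ?_, ?_⟩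
  · -- antisymmetry
    intro x hx y hy hxy hyx
    rcases hxy with rfl | hyA
    · rfl
    rcases hyx with rfl | hxA
    · rfl
    by_contra hne
    exfalso
    have hBeq : B x = B y :=
      Set.Subset.antisymm (hBsub x hx y hy hyA) (hBsub y hy x hx hxA)
    rw [hAmem x hx] at hyA
    rw [hAmem y hy] at hxA
    obtain ⟨-, hyx', hyN⟩ := hyA
    obtain ⟨-, hxy', hxN⟩ := hxA
    obtain ⟨u1, u2, hu1, hu2, hu12, hnadj⟩ := hpair x hx
    have hxu1 : G.Adj x u1 := hnbhd x hx hu1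
    have hxu2 : G.Adj x u2 := hnbhd x hx hu2
    have hu1' : u1 ∈ setNbhd G (B y) := hBeq ▸ hu1
    have hu2' : u2 ∈ setNbhd G (B y) := hBeq ▸ hu2
    have hyu1 : G.Adj y u1 := hnbhd y hy hu1'
    have hyu2 : G.Adj y u2 := hnbhd y hy hu2'
    have hxS : x ∉ setNbhd G (B x) := fun h => G.irrefl (hnbhd x hx h)
    have hyS : y ∉ setNbhd G (B x) := by
      intro h
      exact hyN ⟨hnbhd x hx h, h⟩
    have hu1x : u1 ≠ x := fun h => hxS (h ▸ hu1)
    have hu1y : u1 ≠ y := fun h => hyS (h ▸ hu1)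
    have hu2x : u2 ≠ x := fun h => hxS (h ▸ hu2)
    have hu2y : u2 ≠ y := fun h => hyS (h ▸ hu2)
    by_cases hadjxy : G.Adj x y
    · -- diamond on u1 u2 x y
      apply hd
      apply containsInduced_four G diamond u1 u2 x y
      · intro i j hij
        fin_cases i <;> fin_cases j <;>
          first
            | rfl
            | exact absurd hij hu12 | exact absurd hij.symm hu12
            | exact absurd hij hu1x | exact absurd hij.symm hu1x
            | exact absurd hij hu1y | exact absurd hij.symm hu1y
            | exact absurd hij hu2x | exact absurd hij.symm hu2x
            | exact absurd hij hu2y | exact absurd hij.symm hu2y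
            | exact absurd hij hne | exact absurd hij.symm hne
      · intro i j
        fin_cases i <;> fin_cases j <;>
          first
            | exact iff_of_false (G.irrefl) (by decide)
            | exact iff_of_false hnadj (by decide)
            | exact iff_of_false (fun h => hnadj h.symm) (by decide)
            | exact iff_of_true hxu1.symm (by decide)
            | exact iff_of_true hxu2.symm (by decide)
            | exact iff_of_true hyu1.symm (by decide)
            | exact iff_of_true hyu2.symm (by decide)
            | exact iff_of_true hxu1 (by decide)
            | exact iff_of_true hxu2 (by decide)
            | exact iff_of_true hyu1 (by decide)
            | exact iff_of_true hyu2 (by decide)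
            | exact iff_of_true hadjxy (by decide)
            | exact iff_of_true hadjxy.symm (by decide)
    · -- C4 on x u1 y u2
      apply hc4
      apply containsInduced_four G (cycleGraph 4) x u1 y u2
      · intro i j hij
        fin_cases i <;> fin_cases j <;>
          first
            | rfl
            | exact absurd hij hu12 | exact absurd hij.symm hu12
            | exact absurd hij hu1x | exact absurd hij.symm hu1x
            | exact absurd hij hu1y | exact absurd hij.symm hu1y
            | exact absurd hij hu2x | exact absurd hij.symm hu2x
            | exact absurd hij hu2y | exact absurd hij.symm hu2y
            | exact absurd hij hne | exact absurd hij.symm hne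
      · intro i j
        fin_cases i <;> fin_cases j <;>
          first
            | exact iff_of_false (G.irrefl) (by decide)
            | exact iff_of_false hnadj (by decide)
            | exact iff_of_false (fun h => hnadj h.symm) (by decide)
            | exact iff_of_false hadjxy (by decide)
            | exact iff_of_false (fun h => hadjxy h.symm) (by decide)
            | exact iff_of_true hxu1.symm (by decide)
            | exact iff_of_true hxu2.symm (by decide)
            | exact iff_of_true hyu1.symm (by decide)
            | exact iff_of_true hyu2.symm (by decide)
            | exact iff_of_true hxu1 (by decide)
            | exact iff_of_true hxu2 (by decide)
            | exact iff_of_true hyu1 (by decide)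
            | exact iff_of_true hyu2 (by decide)
  · -- transitivity
    intro x hx y hy z hz hxy hyz
    rcases hxy with rfl | hyA
    · exact hyz
    rcases hyz with rfl | hzA
    · exact Or.inr hyA
    by_cases hxz : x = z
    · exact Or.inl hxz
    right
    rw [hAmem x hx]
    rw [hAmem y hy] at hzA
    obtain ⟨hzBy, hzy, hzN⟩ := hzA
    have hBxy := hBsub x hx y hy hyA
    refine ⟨fun h => hzBy (hBxy h), fun h => hxz h.symm, ?_⟩
    rintro ⟨-, hzS⟩
    obtain ⟨hznB, b, hbB, hadj⟩ := hzS
    have hzSy : z ∈ setNbhd G (B y) := ⟨hzBy, b, hBxy hbB, hadj⟩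
    exact hzN ⟨hnbhd y hy hzSy, hzSy⟩

end Paper
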